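/- arXiv:1408.6220 — 2 statements merged into one kernel-verified Lean document; each statement's English description precedes it below -/
import Mathlib

section
/- Let m, q, b be positive integers with q ≡ 1 (mod m) and b < q (so that m divides b(q−1)). Write b·(q−1)/m = b⁽¹⁾·q + b⁽⁰⁾ with 0 ≤ b⁽⁰⁾ < q and 0 ≤ b⁽¹⁾ < q (the q-adic expansion). Then b⁽¹⁾ + b⁽⁰⁾ < q, and consequently b·(q²−1)/m = b⁽¹⁾·q² + (b⁽¹⁾+b⁽⁰⁾)·q + b⁽⁰⁾ is the q-adic expansion of b·(q²−1)/m. Moreover, if ε is the adjusted remainder of b modulo m (the unique integer with 1 ≤ ε ≤ m and b ≡ ε (mod m)), and b = t·m + ε, then b⁽¹⁾ = t and b⁽⁰⁾ = (q·ε − b)/m. -/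
/--
Lemma on `q`-adic expansions.
Let `m, q, b` be positive integers with `q ≡ 1 (mod m)` and `b < q` (so that `m` divides
`b * (q - 1)`).  Write `b * (q-1) / m = b1 * q + b0` in `q`-adic expansion (i.e. the
hypotheses assert `b * (q - 1) = (b1 * q + b0) * m` with digits `b0, b1 < q`).
Then `b1 + b0 < q`, and consequently
`b * (q^2 - 1) / m = b1 * q^2 + (b1 + b0) * q + b0` is the `q`-adic expansion of
`b * (q^2-1)/m`.  Moreover, if `ε` is the adjusted remainder of `b` modulo `m`
(`1 ≤ ε ≤ m`, `b ≡ ε (mod m)`) and `b = t * m + ε`, then `b1 = t` and `b0 = (q * ε - b)/m`,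
i.e. `m * b0 = q * ε - b`.
-/
theorem stmt0 (m q b : ℕ) (hm : 0 < m) (hq : 0 < q) (hb : 0 < b)
    (hmod : q ≡ 1 [MOD m]) (hbq : b < q)
    (b1 b0 : ℕ) (hb1 : b1 < q) (hb0 : b0 < q)
    (hexp : b * (q - 1) = (b1 * q + b0) * m)
    (ε t : ℕ) (hε1 : 1 ≤ ε) (hεm : ε ≤ m) (hbt : b = t * m + ε) :
    b1 + b0 < q ∧
    b * (q ^ 2 - 1) = (b1 * q ^ 2 + (b1 + b0) * q + b0) * m ∧
    b1 = t ∧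
    m * b0 = q * ε - b := by
  obtain ⟨k, hk⟩ : m ∣ q - 1 := (Nat.modEq_iff_dvd' (by omega)).mp hmod.symm
  have hq2 : 2 ≤ q := by omega
  have hk1 : 1 ≤ k := by
    rcases Nat.eq_zero_or_pos k with h | h
    · subst h; simp at hk; omega
    · exact h
  have hqk : q = m * k + 1 := by omega
  -- cancel m in hexp
  have hbk : b * k = b1 * q + b0 := by
    refine Nat.eq_of_mul_eq_mul_left hm ?_
    have h' : b * (m * k) = (b1 * q + b0) * m := by rw [← hk]; exact hexp
    linear_combination h'
  -- t ≤ ε * k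
  have htek : t ≤ ε * k := by nlinarith
  set c := ε * k - t with hc
  have hcc : ε * k = t + c := by omega
  have h1z : (ε : ℤ) * k = t + c := by exact_mod_cast hcc
  have h2z : (q : ℤ) = m * k + 1 := by exact_mod_cast hqk
  have h3z : (b : ℤ) = t * m + ε := by exact_mod_cast hbt
  have hbqε : b ≤ q * ε := by nlinarith
  have hz : (m : ℤ) * c = q * ε - b := by
    linear_combination -(m : ℤ) * h1z - (ε : ℤ) * h2z + h3z
  have hmc : m * c = q * ε - b := by zify [hbqε]; exact hz
  have hcq : c < q := by
    have h : m * c < m * q := by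
      have h1 : q * ε ≤ q * m := Nat.mul_le_mul_left q hεm
      have h2 : q * m = m * q := Nat.mul_comm q m
      omega
    exact lt_of_mul_lt_mul_left h (Nat.zero_le m)
  -- b1 * q + b0 = t * q + c
  have hbk2 : b1 * q + b0 = t * q + c := by
    rw [← hbk, hbt]
    have h' : (t * m + ε) * k = t * (m * k) + ε * k := by ring
    rw [h', hcc, hqk]; ring
  have hb0c : b0 = c := by
    have h1 : (q * b1 + b0) % q = (q * t + c) % q := by
      rw [mul_comm q b1, mul_comm q t, hbk2]
    simpa [Nat.mul_add_mod, Nat.mod_eq_of_lt hb0, Nat.mod_eq_of_lt hcq] using h1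
  have hb1t : b1 = t := by
    refine Nat.eq_of_mul_eq_mul_right hq ?_
    omega
  have hsum : b1 + b0 < q := by
    have hz2 : (m : ℤ) * ((t : ℤ) + c) = q * ε - ε := by linear_combination hz - h3z
    have hεmz : (ε : ℤ) ≤ m := by exact_mod_cast hεm
    have hqz : (2 : ℤ) ≤ q := by exact_mod_cast hq2
    have e1 : (ε : ℤ) * (q - 1) ≤ (m : ℤ) * (q - 1) :=
      mul_le_mul_of_nonneg_right hεmz (by linarith)
    have e2 : (m : ℤ) * ((t : ℤ) + c) ≤ (m : ℤ) * ((q : ℤ) - 1) := by linarith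
    have e3 : (t : ℤ) + c ≤ (q : ℤ) - 1 :=
      le_of_mul_le_mul_left e2 (by exact_mod_cast hm)
    have hb1z : (b1 : ℤ) = t := by exact_mod_cast hb1t
    have hb0z : (b0 : ℤ) = c := by exact_mod_cast hb0c
    have : (b1 : ℤ) + b0 < q := by rw [hb1z, hb0z]; linarith
    exact_mod_cast this
  refine ⟨hsum, ?_, hb1t, by rw [hb0c]; exact hmc⟩
  obtain ⟨n, rfl⟩ : ∃ n, q = n + 1 := ⟨q - 1, by omega⟩
  have hsq : (n + 1) ^ 2 - 1 = n * (n + 2) := by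
    have : (n + 1) ^ 2 = n * (n + 2) + 1 := by ring
    omega
  rw [hsq]
  have h' : (n + 1) - 1 = n := by omega
  rw [h'] at hexp
  have : b * (n * (n + 2)) = (b * n) * (n + 2) := by ring
  rw [this, hexp]; ring
end

section
/- Let q > 1, and define the q-adic trace tr_q(a) of a nonnegative integer a as the sum of its q-adic digits. If m ≥ 1, q ≡ 1 (mod m), and 0 < b < q has adjusted remainder ε modulo m (1 ≤ ε ≤ m, b ≡ ε mod m), then tr_q(b·(q−1)/m) = ε·(q−1)/m, and moreover tr_q(b·(q²−1)/m) = 2·tr_q(b·(q−1)/m). -/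
/-- The `q`-adic trace of a natural number: the sum of its `q`-adic digits. -/
def qTrace (q a : ℕ) : ℕ := (Nat.digits q a).sum

lemma digits_cons' (q r s : ℕ) (hq : 1 < q) (hr : r < q) (h : 0 < r + q * s) :
    Nat.digits q (r + q * s) = r :: Nat.digits q s := by
  rw [Nat.digits_def' hq h]
  have h1 : (r + q * s) % q = r := by
    rw [Nat.add_mul_mod_self_left, Nat.mod_eq_of_lt hr]
  have h2 : (r + q * s) / q = s := by
    rw [Nat.add_mul_div_left _ _ (by omega : 0 < q), Nat.div_eq_of_lt hr, Nat.zero_add]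
  rw [h1, h2]

lemma sum_digits_small (q a : ℕ) (hq : 1 < q) (ha : a < q) :
    (Nat.digits q a).sum = a := by
  rcases Nat.eq_zero_or_pos a with rfl | h
  · simp
  · rw [Nat.digits_def' hq h, Nat.mod_eq_of_lt ha, Nat.div_eq_of_lt ha]
    simp

/--
Let `q > 1`, `m ≥ 1` with `q ≡ 1 (mod m)`, and let `0 < b < q` have adjusted remainder
`ε` modulo `m` (i.e. `1 ≤ ε ≤ m` and `b ≡ ε (mod m)`).  Then the `q`-adic trace of
`b * (q-1)/m` equals `ε * (q-1)/m`, and the `q`-adic trace of `b * (q^2-1)/m` is twice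
the `q`-adic trace of `b * (q-1)/m`.
-/
theorem stmt1 (q m b ε : ℕ) (hq : 1 < q) (hm : 1 ≤ m) (hmod : q ≡ 1 [MOD m])
    (hb0 : 0 < b) (hbq : b < q) (hε1 : 1 ≤ ε) (hεm : ε ≤ m) (hbε : b ≡ ε [MOD m]) :
    qTrace q (b * (q - 1) / m) = ε * (q - 1) / m ∧
    qTrace q (b * (q ^ 2 - 1) / m) = 2 * qTrace q (b * (q - 1) / m) := by
  have hm0 : 0 < m := hm
  obtain ⟨d, hd⟩ : m ∣ q - 1 := (Nat.modEq_iff_dvd' (by omega)).mp hmod.symm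
  have hεb : ε ≤ b := by
    rcases le_or_gt ε b with h | h
    · exact h
    · exfalso
      have hbm : b < m := lt_of_lt_of_le h hεm
      have hb1 : b % m = b := Nat.mod_eq_of_lt hbm
      have h2 : b % m = ε % m := hbε
      rcases eq_or_lt_of_le hεm with rfl | hlt
      · rw [Nat.mod_self] at h2; omega
      · rw [Nat.mod_eq_of_lt hlt] at h2; omega
  obtain ⟨t, ht⟩ : m ∣ b - ε := (Nat.modEq_iff_dvd' hεb).mp hbε.symm
  have hb' : b = ε + m * t := by
    have := (Nat.sub_eq_iff_eq_add hεb).mp ht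
    rw [this]; ring
  have hq' : q = m * d + 1 := (Nat.sub_eq_iff_eq_add (by omega)).mp hd
  have hd1 : 1 ≤ d := by
    rcases Nat.eq_zero_or_pos d with rfl | h
    · simp at hd; omega
    · exact h
  have htd : t < d := by
    have h1 : m * t < m * d := by rw [← ht, ← hd]; omega
    exact Nat.lt_of_mul_lt_mul_left h1
  have hded : d ≤ ε * d := Nat.le_mul_of_pos_left d hε1
  have htc : t ≤ ε * d := le_trans htd.le hded
  set c := ε * d - t with hcdef
  have hcc : ε * d = c + t := (Nat.sub_add_cancel htc).symm
  have hc0 : 0 < c := by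
    have h5 : t < c + t := hcc ▸ (lt_of_lt_of_le htd hded)
    omega
  have hεdle : ε * d ≤ m * d := Nat.mul_le_mul_right d hεm
  have hεdq : ε * d < q := by
    have h6 : ε * d ≤ q - 1 := by rw [hd]; exact hεdle
    exact lt_of_le_of_lt h6 (by omega)
  have hcq : c < q := by
    have h7 : c ≤ ε * d := by omega
    exact lt_of_le_of_lt h7 hεdq
  have htq : t < q := lt_of_le_of_lt htc hεdq
  have key1 : ε * (q - 1) = m * (ε * d) := by rw [hd]; ring
  have key : b * (q - 1) = m * (c + q * t) := by
    rw [hd, hb', hq']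
    calc (ε + m * t) * (m * d) = m * (ε * d + m * d * t) := by ring
      _ = m * ((c + t) + m * d * t) := by rw [hcc]
      _ = m * (c + (m * d + 1) * t) := by ring
  have key2 : b * (q ^ 2 - 1) = m * (c + q * (ε * d + q * t)) := by
    have hq2pos : 1 ≤ q ^ 2 := Nat.one_le_pow _ _ (by omega)
    zify [hq2pos]
    have hb'' : (b : ℤ) = ε + m * t := by exact_mod_cast hb'
    have hq'' : (q : ℤ) = m * d + 1 := by exact_mod_cast hq'
    have hcc'' : (ε : ℤ) * d = c + t := by exact_mod_cast hcc
    rw [hb'', hq'']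
    linear_combination (m : ℤ) * hcc''
  have hx : b * (q - 1) / m = c + q * t := by
    rw [key, Nat.mul_div_cancel_left _ hm0]
  have hy : b * (q ^ 2 - 1) / m = c + q * (ε * d + q * t) := by
    rw [key2, Nat.mul_div_cancel_left _ hm0]
  have hε : ε * (q - 1) / m = ε * d := by
    rw [key1, Nat.mul_div_cancel_left _ hm0]
  constructor
  · rw [hx, hε]
    unfold qTrace
    rw [digits_cons' q c t hq hcq (by omega), List.sum_cons,
      sum_digits_small q t hq htq]
    exact hcc.symm
  · rw [hy, hx]
    unfold qTrace
    rw [digits_cons' q c (ε * d + q * t) hq hcq (by omega),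
      digits_cons' q (ε * d) t hq hεdq (by positivity),
      digits_cons' q c t hq hcq (by omega),
      List.sum_cons, List.sum_cons, List.sum_cons,
      sum_digits_small q t hq htq]
    omega
end
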